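/- For every strong composition a with ℓ(a) ≤ n, the fundamental quasisymmetric polynomial equals the β = 0 specialization of the quasisymmetric glide polynomial: F_a(x_1,...,x_n) = G_a^{(0)}(x_1,...,x_n). -/

import Mathlib

open scoped Classical
open MvPolynomial Finset

namespace GlidePaper


/-! ## Weak compositions, kompositions, glides -/

/-- Extend a length-`n` weak composition to a function on `ℕ` (zero outside). -/
def extVal {n : ℕ} (v : Fin n → ℕ) (t : ℕ) : ℕ := if h : t < n then v ⟨t, h⟩ else 0

/-- Extend a coloring to a function on `ℕ` (black outside). -/
def extRed {n : ℕ} (r : Fin n → Bool) (t : ℕ) : Bool := if h : t < n then r ⟨t, h⟩ else false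

/-- The flattening of a weak composition: the list of its nonzero entries, in order. -/
def flattenW {n : ℕ} (a : Fin n → ℕ) : List ℕ := ((List.finRange n).map a).filter (· ≠ 0)

/-- The (0-indexed) positions of the nonzero entries of `a`, in increasing order. -/
def nzPos {n : ℕ} (a : Fin n → ℕ) : List ℕ :=
  ((List.finRange n).filter (fun i => a i ≠ 0)).map Fin.val

/-- The excess of a weak komposition, i.e. its number of red entries. -/
def redCount {n : ℕ} (r : Fin n → Bool) : ℕ :=
  (Finset.univ.filter (fun i => r i = true)).card

/-- The weak komposition with values `v` and red set `r` is a glide of the weak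
composition `a` (all of length `n`).  Blocks are delimited by
`0 = e 0 < e 1 < ⋯ < e ℓ ≤ n` where `ℓ` is the number of nonzero entries of `a`;
the `j`-th block consists of the (1-indexed) entries `e j + 1, …, e (j+1)`,
i.e. the 0-indexed positions `e j, …, e (j+1) - 1`, entries beyond position `e ℓ`
vanish, and:
(i) the sum of each block is the corresponding entry of `flat a` plus the number of
red entries of the block; (ii) the block ends weakly left of the position of the
corresponding nonzero entry of `a`; (iii) the first entry of each block is not red.
Red entries are required to be positive. -/
def IsGlide {n : ℕ} (a : Fin n → ℕ) (v : Fin n → ℕ) (r : Fin n → Bool) : Prop :=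
  (∀ i, r i = true → 0 < v i) ∧
  ∃ e : ℕ → ℕ, e 0 = 0 ∧ e (flattenW a).length ≤ n ∧
    (∀ t, e (flattenW a).length ≤ t → extVal v t = 0) ∧
    (∀ j, j < (flattenW a).length → e j < e (j + 1)) ∧
    (∀ j, j < (flattenW a).length →
      ((∑ t ∈ Finset.Ico (e j) (e (j + 1)), extVal v t)
          = (flattenW a).getD j 0
            + ((Finset.Ico (e j) (e (j + 1))).filter (fun t => extRed r t = true)).card)
      ∧ e (j + 1) ≤ (nzPos a).getD j 0 + 1
      ∧ extRed r (e j) = false)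

/-- The glide polynomial `𝒢_a^{(β)}` in variables `x_1, …, x_n`, with coefficient
ring `R` and parameter `β : R`: the sum of `β^{ex(b)} x^b` over all glides `b` of `a`.
(Every glide of `a` has all entries at most `(∑ i, a i) + n`, so the sum below
ranges over a sufficiently large finite set.) -/
noncomputable def glidePoly {n : ℕ} {R : Type*} [CommRing R] (β : R) (a : Fin n → ℕ) :
    MvPolynomial (Fin n) R :=
  ∑ p : (Fin n → Fin ((∑ i, a i) + n + 1)) × (Fin n → Bool),
    if IsGlide a (fun i => (p.1 i : ℕ)) p.2 then
      monomial (Finsupp.equivFunOnFinite.symm fun i => ((p.1 i : ℕ))) (β ^ redCount p.2)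
    else 0




/-! ## Pipe dreams -/

/-- The state of a pipe while being traced through a pipe dream: either inside the
tile in row `r`, column `c` (0-indexed from the top-left), having entered from the
west (`fromWest = true`) or from the south (`fromWest = false`), or already exited
through the top edge at column `c`. -/
inductive PipeState : Type
  | inside (r c : ℕ) (fromWest : Bool)
  | exited (c : ℕ)
deriving DecidableEq

/-- One step of tracing a pipe through the pipe dream with crossing set `D`:
at a crossing tile the pipe goes straight; at an elbow tile a pipe entering from the
west exits north and a pipe entering from the south exits east. -/
def pipeStep (D : Finset (ℕ × ℕ)) : PipeState → PipeState
  | .exited c => .exited c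
  | .inside r c fromW =>
    let cross : Bool := decide ((r, c) ∈ D)
    if fromW ≠ cross then
      -- exits through the north edge of the tile
      if r = 0 then .exited c else .inside (r - 1) c false
    else .inside r (c + 1) true

/-- The pipe labeled `p` (0-indexed) enters the quadrant at row `p` from the west. -/
def startState (p : ℕ) : PipeState := .inside p 0 true

/-- Pipe `p` passes through tile `(r, c)` entering from the west (`fromW = true`)
or from the south (`fromW = false`). -/
def Passes (D : Finset (ℕ × ℕ)) (p r c : ℕ) (fromW : Bool) : Prop :=
  ∃ k, (pipeStep D)^[k] (startState p) = .inside r c fromW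

/-- Pipe `p` exits the quadrant through the top edge at column `c` (0-indexed). -/
def ExitsAt (D : Finset (ℕ × ℕ)) (p c : ℕ) : Prop :=
  ∃ k, (pipeStep D)^[k] (startState p) = .exited c

/-- The tile `x` is a crossing of `D` whose west-entering pipe is `p` and whose
south-entering pipe is `q`. -/
def CrossPair (D : Finset (ℕ × ℕ)) (x : ℕ × ℕ) (p q : ℕ) : Prop :=
  x ∈ D ∧ Passes D p x.1 x.2 true ∧ Passes D q x.1 x.2 false

/-- The reduction of a pipe dream: keep, among the crossings between each pair of
pipes, only the southwestmost one. -/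
noncomputable def reduct (D : Finset (ℕ × ℕ)) : Finset (ℕ × ℕ) :=
  D.filter (fun x => ∀ y ∈ D, ∀ p q : ℕ,
    CrossPair D x p q → (CrossPair D y p q ∨ CrossPair D y q p) → (y.1 ≤ x.1 ∧ x.2 ≤ y.2))

/-- `D` is a pipe dream for the permutation `w` (of `ℕ`, 0-indexed): in the reduction
of `D`, the pipe entering at row `p` exits at column `w p`, for every `p`. -/
def HasPerm (D : Finset (ℕ × ℕ)) (w : Equiv.Perm ℕ) : Prop :=
  ∀ p, ExitsAt (reduct D) p (w p)

/-- The excess of a pipe dream: its number of crossings minus that of its reduction. -/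
noncomputable def pdExcess (D : Finset (ℕ × ℕ)) : ℕ := D.card - (reduct D).card

/-- The number of crossings in (0-indexed) row `i` of `D`. -/
def wtRow (D : Finset (ℕ × ℕ)) (i : ℕ) : ℕ := (D.filter (fun x => x.1 = i)).card

/-- A pipe dream is quasi-Yamanouchi if the westmost crossing of every nonempty row
either lies in the westmost column or lies weakly west of some crossing in the row
below it. -/
def QuasiYamPD (D : Finset (ℕ × ℕ)) : Prop :=
  ∀ r c, (r, c) ∈ D → (∀ c' < c, (r, c') ∉ D) →
    (c = 0 ∨ ∃ c'', (r + 1, c'') ∈ D ∧ c ≤ c'')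

/-- One destandardization move, applied to row `r`: if row `r` is nonempty, has no
crossing in the first column, and all its crossings are strictly east of all the
crossings of row `r + 1`, shift every crossing of row `r` one step southwest
(crossings landing on existing crossings merge). -/
def DstStep (D : Finset (ℕ × ℕ)) (r : ℕ) (D' : Finset (ℕ × ℕ)) : Prop :=
  (∃ c, (r, c) ∈ D) ∧ (r, 0) ∉ D ∧
  (∀ c c', (r, c) ∈ D → (r + 1, c') ∈ D → c' < c) ∧
  D' = D.filter (fun x => x.1 ≠ r) ∪
        (D.filter (fun x => x.1 = r)).image (fun x => (r + 1, x.2 - 1))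

/-- `D'` is obtained from `D` by a (possibly empty) sequence of destandardization moves. -/
def DstReaches (D D' : Finset (ℕ × ℕ)) : Prop :=
  Relation.ReflTransGen (fun E E' => ∃ r, DstStep E r E') D D'

/-- No destandardization move applies to `D`. -/
def DstNormal (D : Finset (ℕ × ℕ)) : Prop := ∀ r D', ¬ DstStep D r D'

/-- The `β`-Grothendieck polynomial of `w`, written in the variables `x_1, …, x_n`:
the sum of `β^{ex(P)} x^{wt(P)}` over all pipe dreams `P` for `w`.  (All crossings
of any pipe dream for a permutation `w` with `w i = i` for `i ≥ m` lie in rows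
`< m` and columns `< m`, so for `n, M ≥ m` the finite sum below, over pipe dreams
contained in the box with `n` rows and `M` columns, is the full sum.) -/
noncomputable def grothPoly {R : Type*} [CommRing R] (β : R) (n M : ℕ) (w : Equiv.Perm ℕ) :
    MvPolynomial (Fin n) R :=
  ∑ D ∈ (Finset.range n ×ˢ Finset.range M).powerset.filter (fun D => HasPerm D w),
    monomial (Finsupp.equivFunOnFinite.symm fun i : Fin n => wtRow D i.1) (β ^ pdExcess D)




/-! ## Slide polynomials, refinement, dominance -/


/-- `b` dominates `a`: every initial partial sum of `b` is at least that of `a`. -/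
def Dominates {n : ℕ} (b a : Fin n → ℕ) : Prop :=
  ∀ k : ℕ, ∑ i ∈ Finset.univ.filter (fun i : Fin n => (i : ℕ) < k), a i
    ≤ ∑ i ∈ Finset.univ.filter (fun i : Fin n => (i : ℕ) < k), b i

/-- The (strong) composition `L` refines the composition `M` if `M` is obtained by
summing consecutive entries of `L`. -/
def ListRefines (L M : List ℕ) : Prop :=
  ∃ P : List (List ℕ), ([] ∉ P) ∧ P.flatten = L ∧ P.map List.sum = M

/-- The fundamental slide polynomial `𝔉_a`: the sum of `x^b` over weak compositions
`b` of length `n` which dominate `a` and with `flat b` refining `flat a`. -/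
noncomputable def slidePoly {n : ℕ} (a : Fin n → ℕ) : MvPolynomial (Fin n) ℤ :=
  ∑ p : Fin n → Fin ((∑ i, a i) + 1),
    if Dominates (fun i => (p i : ℕ)) a ∧
        ListRefines (flattenW (fun i => (p i : ℕ))) (flattenW a) then
      monomial (Finsupp.equivFunOnFinite.symm fun i => ((p i : ℕ))) 1
    else 0

/-- The fundamental quasisymmetric polynomial `F_a(x_1, …, x_n)` of a strong
composition `a`: the sum of `x^b` over weak compositions `b` of length `n` with
`flat b` refining `a`. -/
noncomputable def fundQS {R : Type*} [CommRing R] (n : ℕ) (a : List ℕ) :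
    MvPolynomial (Fin n) R :=
  ∑ p : Fin n → Fin (a.sum + 1),
    if ListRefines (flattenW (fun i => ((p i : ℕ)))) a then
      monomial (Finsupp.equivFunOnFinite.symm fun i => ((p i : ℕ))) 1
    else 0

/-- The weak composition of length `n` obtained from a list `L` (of length `≤ n`)
by prepending `n - L.length` zeros. -/
def padLeft (n : ℕ) (L : List ℕ) : Fin n → ℕ := fun i =>
  if n - L.length ≤ (i : ℕ) then L.getD ((i : ℕ) - (n - L.length)) 0 else 0

/-- A polynomial in `x_1, …, x_n` is quasisymmetric if, for every sequence of
positive exponents `e_1, …, e_k` and every pair of strictly increasing sequences of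
variable indices, the coefficients of the corresponding monomials agree. -/
def IsQuasiSym {R : Type*} [CommRing R] {n : ℕ} (f : MvPolynomial (Fin n) R) : Prop :=
  ∀ (k : ℕ) (e : Fin k → ℕ), (∀ t, 0 < e t) →
    ∀ g h : Fin k → Fin n, StrictMono g → StrictMono h →
      MvPolynomial.coeff
          (Finsupp.equivFunOnFinite.symm fun i => ∑ t, if g t = i then e t else 0) f
        = MvPolynomial.coeff
            (Finsupp.equivFunOnFinite.symm fun i => ∑ t, if h t = i then e t else 0) f




/-! ## Set-valued tableaux -/

/-- `f` (giving, for each box `(i, j)` with `i < n`, `j < B`, a set of entries,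
where the element `k : Fin n` stands for the value `k + 1 ∈ {1, …, n}`) is a
set-valued tableau of shape `lam`: boxes of the diagram are nonempty, boxes outside
are empty, rows weakly increase (max of a box ≤ min of the box to its right) and
columns strictly increase. -/
def IsSVT (n B : ℕ) (lam : ℕ → ℕ) (f : Fin n → Fin B → Finset (Fin n)) : Prop :=
  (∀ (i : Fin n) (j : Fin B), (j : ℕ) < lam (i : ℕ) → (f i j).Nonempty) ∧
  (∀ (i : Fin n) (j : Fin B), lam (i : ℕ) ≤ (j : ℕ) → f i j = ∅) ∧
  (∀ (i : Fin n) (j j' : Fin B), (j : ℕ) + 1 = (j' : ℕ) → (j' : ℕ) < lam (i : ℕ) →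
    ∀ x ∈ f i j, ∀ y ∈ f i j', x ≤ y) ∧
  (∀ (i i' : Fin n) (j : Fin B), (i : ℕ) + 1 = (i' : ℕ) → (j : ℕ) < lam (i' : ℕ) →
    ∀ x ∈ f i j, ∀ y ∈ f i' j, (x : ℕ) < (y : ℕ))

/-- A set-valued tableau is quasi-Yamanouchi if for every value `k + 1 > 1` occurring
in it, some instance of `k + 1` lies weakly left of some instance of `k` in a
different box. -/
def SVTQY {n B : ℕ} (f : Fin n → Fin B → Finset (Fin n)) : Prop :=
  ∀ k : Fin n, 0 < (k : ℕ) → (∃ i j, k ∈ f i j) →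
    ∃ (i : Fin n) (j : Fin B) (i' : Fin n) (j' : Fin B) (k' : Fin n),
      (k' : ℕ) + 1 = (k : ℕ) ∧ k ∈ f i j ∧ k' ∈ f i' j' ∧
      (j : ℕ) ≤ (j' : ℕ) ∧ (i, j) ≠ (i', j')

/-- The weight of a set-valued tableau: its `k`-th entry is the number of boxes
containing the value `k + 1`. -/
def svtWt {n B : ℕ} (f : Fin n → Fin B → Finset (Fin n)) : Fin n → ℕ :=
  fun k => ∑ i : Fin n, ∑ j : Fin B, if k ∈ f i j then 1 else 0

/-- The total number of entries of a set-valued tableau. -/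
def svtSize {n B : ℕ} (f : Fin n → Fin B → Finset (Fin n)) : ℕ :=
  ∑ i : Fin n, ∑ j : Fin B, (f i j).card

/-- The Lehmer code of a permutation of `ℕ` (0-indexed). -/
noncomputable def lehmer (w : Equiv.Perm ℕ) (i : ℕ) : ℕ :=
  Set.ncard {j | i < j ∧ w j < w i}

/-- The number of inversions of a permutation of `ℕ`. -/
noncomputable def invNum (w : Equiv.Perm ℕ) : ℕ :=
  Set.ncard {p : ℕ × ℕ | p.1 < p.2 ∧ w p.2 < w p.1}

/-- The Knutson–Miller–Yong map `φ` from set-valued tableaux (entries in `{1,…,n}`,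
shape with at most `n` rows, boxes indexed by `Fin n × Fin B`) to pipe dreams:
a value `k + 1` in the (0-indexed) box `(i, j)` becomes a crossing in row
`n - 1 - k` and column `j + k - i`.  (This is the upside-down placement over the
bottom pipe dream `P_{L(w)}` followed by moving each label `i + r - n - 1` steps
northeast.) -/
def phiKMY (n B : ℕ) (f : Fin n → Fin B → Finset (Fin n)) : Finset (ℕ × ℕ) :=
  ((Finset.univ : Finset (Fin n × Fin B × Fin n)).filter
      (fun t => t.2.2 ∈ f t.1 t.2.1)).image
    (fun t => (n - 1 - (t.2.2 : ℕ), (t.2.1 : ℕ) + (t.2.2 : ℕ) - (t.1 : ℕ)))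





/-! ## Multi-fundamental quasisymmetric functions -/

/-- Between the `i`-th and `(i+1)`-st sets (0-indexed) of a chain for the strong
composition `a`, the strict inequality is imposed exactly when `i + 1` is a partial
sum `a_1 + ⋯ + a_k` of `a`. -/
def ChainStrictAt (a : List ℕ) (i : ℕ) : Prop := ∃ k, 0 < k ∧ (a.take k).sum = i + 1

/-- `σ = (S_1, …, S_{|a|})` is a chain in `Ã_a`: a sequence of `a.sum` nonempty
finite sets of positive integers with `max S_i < min S_{i+1}` when `i` is a partial
sum of `a`, and `max S_i ≤ min S_{i+1}` otherwise. -/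
def IsMultiChain (a : List ℕ) (σ : List (Finset ℕ)) : Prop :=
  σ.length = a.sum ∧ (∀ S ∈ σ, S.Nonempty) ∧ (∀ S ∈ σ, ∀ x ∈ S, 1 ≤ x) ∧
  ∀ i, i + 1 < σ.length →
    ((ChainStrictAt a i → ∀ x ∈ σ.getD i ∅, ∀ y ∈ σ.getD (i + 1) ∅, x < y) ∧
     (¬ ChainStrictAt a i → ∀ x ∈ σ.getD i ∅, ∀ y ∈ σ.getD (i + 1) ∅, x ≤ y))

/-- The number of occurrences of the value `x` among the sets of the chain `σ`. -/
def chainWt (σ : List (Finset ℕ)) (x : ℕ) : ℕ := (σ.filter (fun S => x ∈ S)).length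

/-- The weak composition of length `m + n` obtained by prepending `m` zeros to `a`. -/
def prependZeros {n : ℕ} (m : ℕ) (a : Fin n → ℕ) : Fin (m + n) → ℕ := fun i =>
  if h : (i : ℕ) < m then 0 else a ⟨(i : ℕ) - m, by have := i.isLt; omega⟩

/-! ## Unsplit glides, quasiflatness -/


/-- A weak composition is quasiflat if its nonzero entries occupy consecutive
positions. -/
def Quasiflat {n : ℕ} (a : Fin n → ℕ) : Prop :=
  ∀ i j k : Fin n, i ≤ j → j ≤ k → a i ≠ 0 → a k ≠ 0 → a j ≠ 0

/-- The number of zero entries of `a` that precede some nonzero entry. -/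
def zBefore {n : ℕ} (a : Fin n → ℕ) : ℕ :=
  (Finset.univ.filter (fun i : Fin n => a i = 0 ∧ ∃ j, i < j ∧ a j ≠ 0)).card




/-! ## The genomic shuffle product and the glide product -/

/-- `C` is a shuffle (interleaving) of the words `A` and `B`. -/
inductive IsShuffle {α : Type*} : List α → List α → List α → Prop
  | nil : IsShuffle [] [] []
  | left {A B C : List α} {a : α} : IsShuffle A B C → IsShuffle (a :: A) B (a :: C)
  | right {A B C : List α} {b : α} : IsShuffle A B C → IsShuffle A (b :: B) (b :: C)

/-- `A^gen`: replace the `j`-th occurrence (from the left) of each letter `i` of `A`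
by the superscripted symbol `(i, j)`. -/
def toGen (A : List ℕ) : List (ℕ × ℕ) :=
  (List.range A.length).map (fun i => (A.getD i 0, (A.take i).count (A.getD i 0) + 1))

/-- The lexicographic order on superscripted symbols: `i^j < k^l` iff `i < k`, or
`i = k` and `j < l`. -/
def ltSym (x y : ℕ × ℕ) : Prop := x.1 < y.1 ∨ (x.1 = y.1 ∧ x.2 < y.2)

/-- `C` lies in the genomic shuffle product `A ⧢_gen B`: superscripts of equal
letters weakly increase from left to right, no two consecutive symbols of `C` are
equal, and every subword of `C` containing each symbol of `C` exactly once is a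
shuffle of `A^gen` and `B^gen`. -/
def InGenShuffle (A B : List ℕ) (C : List (ℕ × ℕ)) : Prop :=
  (∀ p q : ℕ, p < q → ∀ (hp : p < C.length) (hq : q < C.length),
    (C.get ⟨p, hp⟩).1 = (C.get ⟨q, hq⟩).1 → (C.get ⟨p, hp⟩).2 ≤ (C.get ⟨q, hq⟩).2) ∧
  List.Chain' (· ≠ ·) C ∧
  (∀ C' : List (ℕ × ℕ), C'.Sublist C → (∀ s ∈ C, C'.count s = 1) →
    IsShuffle (toGen A) (toGen B) C')

/-- `R` is the decomposition of the word `C` into its maximal strictly increasing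
runs. -/
def IsRunDecomp (C : List (ℕ × ℕ)) (R : List (List (ℕ × ℕ))) : Prop :=
  R.flatten = C ∧ (∀ r ∈ R, r ≠ []) ∧ (∀ r ∈ R, r.Chain' ltSym) ∧
  R.Chain' (fun r s => ∀ x y, x ∈ r.getLast? → y ∈ s.head? → ¬ ltSym x y)

/-- `G` is a genotype of the sequence of words `R`: it is obtained by deleting, from
the words of `R`, all but one occurrence of each symbol occurring in `R`, and then
erasing all superscripts. -/
def IsGenotypeSeq (R : List (List (ℕ × ℕ))) (G : List (List ℕ)) : Prop :=
  ∃ R' : List (List (ℕ × ℕ)), R'.length = R.length ∧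
    (∀ i, (R'.getD i []).Sublist (R.getD i [])) ∧
    (∀ s ∈ R.flatten, (R'.flatten).count s = 1) ∧
    G = R'.map (List.map Prod.fst)

/-- `Comp_𝔅(G)` for the letter set `𝔅 = {x | P x}`: the list whose `i`-th entry is
the number of letters of `𝔅` in the `i`-th word of `G`. -/
def compOf (P : ℕ → Bool) (G : List (List ℕ)) : List ℕ :=
  G.map (fun wrd => (wrd.filter (fun x => P x)).length)

/-- The list `L` dominates the weak composition `a`: every initial partial sum of
`L` is at least the corresponding one of `a`. -/
def DomGe {n : ℕ} (L : List ℕ) (a : Fin n → ℕ) : Prop :=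
  ∀ k : ℕ, (∑ i ∈ Finset.univ.filter (fun i : Fin n => (i : ℕ) < k), a i) ≤ (L.take k).sum

/-- The word `A = (2n-1)^{a_1} (2n-3)^{a_2} ⋯ (1)^{a_n}` on the odd letters. -/
def wordA {n : ℕ} (a : Fin n → ℕ) : List ℕ :=
  (((List.finRange n).map (fun i => List.replicate (a i) (2 * (n - (i : ℕ)) - 1)))).flatten

/-- The word `B = (2n)^{b_1} (2n-2)^{b_2} ⋯ (2)^{b_n}` on the even letters. -/
def wordB {n : ℕ} (b : Fin n → ℕ) : List ℕ :=
  (((List.finRange n).map (fun i => List.replicate (b i) (2 * (n - (i : ℕ)))))).flatten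

/-- `C` lies in the genomic shuffle set `GSS(a, b)`: it lies in the genomic shuffle
product of the associated words and every genotype `G` of `Runs(C)` satisfies
`Comp_odd(G) ≥ a` and `Comp_even(G) ≥ b` in dominance order. -/
def InGSS {n : ℕ} (a b : Fin n → ℕ) (C : List (ℕ × ℕ)) : Prop :=
  InGenShuffle (wordA a) (wordB b) C ∧
  ∀ R G, IsRunDecomp C R → IsGenotypeSeq R G →
    DomGe (compOf (fun x => x % 2 == 1) G) a ∧ DomGe (compOf (fun x => x % 2 == 0) G) b

/-- `S` is a valid insertion of empty words into `Runs(C)`, of total length `n`,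
such that every genotype of `S` still satisfies the dominance conditions. -/
def BumpValid {n : ℕ} (a b : Fin n → ℕ) (C : List (ℕ × ℕ))
    (S : List (List (ℕ × ℕ))) : Prop :=
  S.length = n ∧ (∃ R, IsRunDecomp C R ∧ S.filter (fun r => r ≠ []) = R) ∧
  ∀ G, IsGenotypeSeq S G →
    DomGe (compOf (fun x => x % 2 == 1) G) a ∧ DomGe (compOf (fun x => x % 2 == 0) G) b

/-- `S = BumpRuns(C)`: `S` is the dominance-minimal valid insertion of empty words
into `Runs(C)`. -/
def IsBumpRuns {n : ℕ} (a b : Fin n → ℕ) (C : List (ℕ × ℕ))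
    (S : List (List (ℕ × ℕ))) : Prop :=
  BumpValid a b C S ∧ ∀ S', BumpValid a b C S' →
    ∀ k, ((S.take k).map List.length).sum ≤ ((S'.take k).map List.length).sum

/-- The multiplicity `g_{a,b}^c` of the weak composition `c` in the glide product
`a ⧢_gen b`: the number of words `C ∈ GSS(a, b)` with `Comp(BumpRuns(C)) = c`. -/
noncomputable def glideMult {n : ℕ} (a b c : Fin n → ℕ) : ℕ :=
  Set.ncard {C : List (ℕ × ℕ) | InGSS a b C ∧
    ∃ S, IsBumpRuns a b C S ∧ (fun i : Fin n => (S.getD (i : ℕ) []).length) = c}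



/-- The quasisymmetric glide polynomial `G_a^{(β)}(x_1, …, x_n)` of a strong
composition `a` with `ℓ(a) ≤ n`: the glide polynomial of the weak composition
`0^{n - ℓ(a)} a`. -/
noncomputable def qsGlide {R : Type*} [CommRing R] (β : R) (n : ℕ) (a : List ℕ) :
    MvPolynomial (Fin n) R :=
  glidePoly β (padLeft n a)

/-- A glide `(v, r)` of `a` is unsplit if its number of nonzero black entries
equals the number of nonzero entries of `a`, and no zero entry lies to the right of
a nonzero entry. -/
def IsUnsplitGlide {n : ℕ} (a : Fin n → ℕ) (v : Fin n → ℕ) (r : Fin n → Bool) : Prop :=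
  IsGlide a v r ∧
  (Finset.univ.filter (fun i => v i ≠ 0 ∧ r i = false)).card
      = (Finset.univ.filter (fun i => a i ≠ 0)).card ∧
  (∀ i j : Fin n, i < j → v i ≠ 0 → v j ≠ 0)


section AuxProof
variable {n : ℕ}

lemma extVal_eq (v : Fin n → ℕ) (i : Fin n) : extVal v i = v i := by
  simp [extVal, i.isLt]

lemma extVal_of_ge (v : Fin n → ℕ) {t : ℕ} (h : n ≤ t) : extVal v t = 0 := by
  simp [extVal, Nat.not_lt.mpr h]

lemma flattenW_eq (v : Fin n → ℕ) : flattenW v = (nzPos v).map (extVal v) := by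
  unfold flattenW nzPos
  rw [List.map_map, List.filter_map]
  exact List.map_congr_left (f := v) (g := extVal v ∘ Fin.val)
    (fun i _ => (extVal_eq v i).symm)

lemma mem_nzPos (v : Fin n → ℕ) (t : ℕ) : t ∈ nzPos v ↔ extVal v t ≠ 0 := by
  unfold nzPos
  simp only [List.mem_map, List.mem_filter, List.mem_finRange, true_and]
  constructor
  · rintro ⟨i, hi, rfl⟩
    simpa [extVal_eq] using hi
  · intro h
    have htn : t < n := by
      by_contra hc
      exact h (extVal_of_ge v (Nat.le_of_not_lt hc))
    refine ⟨⟨t, htn⟩, ?_, rfl⟩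
    simpa using (extVal_eq v ⟨t, htn⟩ ▸ h)

lemma nzPos_lt_n (v : Fin n → ℕ) {t : ℕ} (h : t ∈ nzPos v) : t < n := by
  by_contra hc
  exact (mem_nzPos v t).mp h (extVal_of_ge v (Nat.le_of_not_lt hc))

lemma nzPos_pairwise (v : Fin n → ℕ) : (nzPos v).Pairwise (· < ·) := by
  unfold nzPos
  rw [List.pairwise_map]
  exact ((List.pairwise_lt_finRange n).sublist List.filter_sublist).imp
    (fun h => h)

lemma nzPos_nodup (v : Fin n → ℕ) : (nzPos v).Nodup :=
  (nzPos_pairwise v).imp (fun h => Nat.ne_of_lt h)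

-- strict monotonicity of getD on nzPos
lemma nzPos_strictMono (v : Fin n → ℕ) {k k' : ℕ} (h : k < k')
    (h' : k' < (nzPos v).length) :
    (nzPos v).getD k 0 < (nzPos v).getD k' 0 := by
  rw [List.getD_eq_getElem _ _ (lt_trans h h'), List.getD_eq_getElem _ _ h']
  exact List.pairwise_iff_getElem.mp (nzPos_pairwise v) k k' _ _ h

lemma nzPos_le_iff (v : Fin n → ℕ) {k k' : ℕ} (hk : k < (nzPos v).length)
    (hk' : k' < (nzPos v).length) :
    (nzPos v).getD k 0 ≤ (nzPos v).getD k' 0 ↔ k ≤ k' := by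
  constructor
  · intro h
    by_contra hc
    exact absurd h (Nat.not_le.mpr (nzPos_strictMono v (Nat.lt_of_not_le hc) hk))
  · intro h
    rcases Nat.eq_or_lt_of_le h with rfl | h
    · exact le_rfl
    · exact le_of_lt (nzPos_strictMono v h hk')

lemma nzPos_lt_iff (v : Fin n → ℕ) {k k' : ℕ} (hk : k < (nzPos v).length)
    (hk' : k' < (nzPos v).length) :
    (nzPos v).getD k 0 < (nzPos v).getD k' 0 ↔ k < k' := by
  rw [← Nat.not_le, ← Nat.not_le, not_iff_not]
  exact nzPos_le_iff v hk' hk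

lemma nzPos_getD_mem (v : Fin n → ℕ) {k : ℕ} (hk : k < (nzPos v).length) :
    (nzPos v).getD k 0 ∈ nzPos v := by
  rw [List.getD_eq_getElem _ _ hk]; exact List.getElem_mem hk

lemma nzPos_upper (v : Fin n → ℕ) {k : ℕ} (hk : k < (nzPos v).length) :
    (nzPos v).getD k 0 + ((nzPos v).length - 1 - k) < n := by
  -- s k + i ≤ s (k+i)
  have key : ∀ i, k + i < (nzPos v).length →
      (nzPos v).getD k 0 + i ≤ (nzPos v).getD (k + i) 0 := by
    intro i
    induction i with
    | zero => intro _; simp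
    | succ i ih =>
      intro h
      have h1 : k + i < (nzPos v).length := by omega
      have := nzPos_strictMono v (by omega : k + i < k + (i+1)) (by omega : k + (i+1) < (nzPos v).length)
      have := ih h1
      omega
  have h1 : k + ((nzPos v).length - 1 - k) < (nzPos v).length := by omega
  have := key _ h1
  have := nzPos_lt_n v (nzPos_getD_mem v h1)
  omega

lemma flattenW_length (v : Fin n → ℕ) : (flattenW v).length = (nzPos v).length := by
  rw [flattenW_eq, List.length_map]

lemma flattenW_getD (v : Fin n → ℕ) {k : ℕ} (hk : k < (nzPos v).length) :
    (flattenW v).getD k 0 = extVal v ((nzPos v).getD k 0) := by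
  rw [flattenW_eq, List.getD_eq_getElem _ _ (by simpa using hk),
    List.getD_eq_getElem _ _ hk]
  simp

/-! sums -/

lemma take_sum (l : List ℕ) (t : ℕ) : (l.take t).sum = ∑ i ∈ Finset.range t, l.getD i 0 := by
  induction t with
  | zero => simp
  | succ t ih =>
    rw [List.take_succ, List.sum_append, Finset.sum_range_succ, ih,
      List.getD_eq_getElem?_getD]
    cases h : l[t]? <;> simp [h]

lemma slice_sum (l : List ℕ) (u w : ℕ) :
    ((l.drop u).take (w - u)).sum = ∑ k ∈ Finset.Ico u w, l.getD k 0 := by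
  rw [Finset.sum_Ico_eq_sum_range, take_sum]
  apply Finset.sum_congr rfl
  intro i _
  rw [List.getD_eq_getElem?_getD, List.getD_eq_getElem?_getD, List.getElem?_drop]



lemma mono_of_steps (f : ℕ → ℕ) (L : ℕ) (h : ∀ j, j < L → f j ≤ f (j + 1)) :
    ∀ i j, i ≤ j → j ≤ L → f i ≤ f j := by
  intro i j hij hjL
  induction j with
  | zero => obtain rfl := Nat.le_zero.mp hij; exact le_rfl
  | succ j ih =>
    rcases Nat.eq_or_lt_of_le hij with rfl | hlt
    · exact le_rfl
    · exact le_trans (ih (by omega) (by omega)) (h j (by omega))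

lemma steps_ge (f : ℕ → ℕ) (L : ℕ) (h : ∀ j, j < L → f j + 1 ≤ f (j + 1)) :
    ∀ i j, i ≤ j → j ≤ L → f i + (j - i) ≤ f j := by
  intro i j hij hjL
  induction j with
  | zero => obtain rfl := Nat.le_zero.mp hij; simp
  | succ j ih =>
    rcases Nat.eq_or_lt_of_le hij with rfl | hlt
    · simp
    · have := ih (by omega) (by omega)
      have := h j (by omega)
      omega

lemma mem_le_sum {l : List ℕ} {x : ℕ} (h : x ∈ l) : x ≤ l.sum := by
  induction l with
  | nil => simp at h
  | cons y t ih =>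
    rcases List.mem_cons.mp h with rfl | h
    · simp
    · have := ih h
      simp only [List.sum_cons]
      omega

lemma filter_length_char {l : List ℕ} (hl : l.Pairwise (· < ·)) (B : ℕ) :
    ∀ k, k < l.length →
      (l.getD k 0 < B ↔ k < (l.filter (fun t => decide (t < B))).length) := by
  induction l with
  | nil => intro k hk; simp at hk
  | cons x t ih =>
    intro k hk
    have hpt : t.Pairwise (· < ·) := hl.of_cons
    by_cases hx : x < B
    · rw [List.filter_cons_of_pos (by simpa using hx)]
      cases k with
      | zero => simpa using hx
      | succ k =>
        have := ih hpt k (by simpa using hk)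
        simpa using this
    · have hft : t.filter (fun t => decide (t < B)) = [] := by
        rw [List.filter_eq_nil_iff]
        intro y hy
        have : x < y := (List.pairwise_cons.mp hl).1 y hy
        simp only [decide_eq_true_eq]
        omega
      rw [List.filter_cons_of_neg (by simpa using hx), hft]
      simp only [List.length_nil, Nat.not_lt_zero, iff_false, Nat.not_lt]
      cases k with
      | zero => simpa using Nat.le_of_not_lt hx
      | succ k =>
        have hkt : k < t.length := by simpa using hk
        rw [List.getD_cons_succ, List.getD_eq_getElem _ _ hkt]
        have : x < t[k] := (List.pairwise_cons.mp hl).1 _ (List.getElem_mem hkt)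
        omega

lemma flatten_slice (P : List (List ℕ)) :
    ∀ j, j < P.length →
      ((P.flatten.drop (((P.take j).map List.length).sum)).take ((P.getD j []).length))
        = P.getD j [] := by
  induction P with
  | nil => intro j hj; simp at hj
  | cons Q T ih =>
    intro j hj
    cases j with
    | zero =>
      simp only [List.take_zero, List.map_nil, List.sum_nil, List.drop_zero,
        List.getD_cons_zero, List.flatten_cons]
      exact List.take_left
    | succ j =>
      have hjT : j < T.length := by simpa using hj
      simp only [List.take_succ_cons, List.map_cons, List.sum_cons, List.flatten_cons,
        List.getD_cons_succ]
      rw [List.drop_append, List.drop_eq_nil_of_le (by omega), List.nil_append,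
        Nat.add_sub_cancel_left]
      exact ih j hjT

lemma flatten_slices (l : List ℕ) (d : ℕ → ℕ) (L : ℕ) (hd0 : d 0 = 0)
    (hdL : d L = l.length) (hmono : ∀ j, j < L → d j ≤ d (j + 1)) :
    ((List.range L).map (fun j => (l.drop (d j)).take (d (j + 1) - d j))).flatten = l := by
  have key : ∀ M, M ≤ L →
      ((List.range M).map (fun j => (l.drop (d j)).take (d (j + 1) - d j))).flatten
        = l.take (d M) := by
    intro M
    induction M with
    | zero => intro _; simp [hd0]
    | succ M ih =>
      intro hM
      rw [List.range_succ, List.map_append, List.flatten_append, ih (by omega)]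
      simp only [List.map_cons, List.map_nil, List.flatten_cons, List.flatten_nil,
        List.append_nil]
      have h1 : d (M + 1) = d M + (d (M + 1) - d M) := by
        have := hmono M (by omega); omega
      rw [h1, List.take_add, Nat.add_sub_cancel_left]
  rw [key L le_rfl, hdL, List.take_length]




lemma ico_extVal_sum (v : Fin n → ℕ) {A B u w : ℕ} (hB : B ≤ n)
    (hw : w ≤ (nzPos v).length)
    (hchar : ∀ k, k < (nzPos v).length →
      ((A ≤ (nzPos v).getD k 0 ∧ (nzPos v).getD k 0 < B) ↔ (u ≤ k ∧ k < w))) :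
    ∑ t ∈ Finset.Ico A B, extVal v t
      = ∑ k ∈ Finset.Ico u w, (flattenW v).getD k 0 := by
  set l := nzPos v with hl
  rw [← Finset.sum_filter_ne_zero (Finset.Ico A B) (f := extVal v)]
  refine Finset.sum_nbij' (fun t => l.idxOf t) (fun k => l.getD k 0) ?_ ?_ ?_ ?_ ?_
  · -- maps to
    intro t ht
    simp only [Finset.mem_filter, Finset.mem_Ico] at ht
    obtain ⟨⟨hAt, htB⟩, hne⟩ := ht
    have htl : t ∈ l := (mem_nzPos v t).mpr hne
    have hidx : l.idxOf t < l.length := List.idxOf_lt_length_iff.mpr htl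
    have hgetD : l.getD (l.idxOf t) 0 = t := by
      rw [List.getD_eq_getElem _ _ hidx]; exact List.getElem_idxOf hidx
    have := (hchar _ hidx).mp (by rw [hgetD]; exact ⟨hAt, htB⟩)
    simpa [Finset.mem_Ico] using this
  · -- maps back
    intro k hk
    simp only [Finset.mem_Ico] at hk
    have hkl : k < l.length := lt_of_lt_of_le hk.2 hw
    have hmem : l.getD k 0 ∈ l := nzPos_getD_mem v hkl
    have hne : extVal v (l.getD k 0) ≠ 0 := (mem_nzPos v _).mp hmem
    have := (hchar k hkl).mpr hk
    simp only [Finset.mem_filter, Finset.mem_Ico]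
    exact ⟨this, hne⟩
  · -- left inverse
    intro t ht
    simp only [Finset.mem_filter, Finset.mem_Ico] at ht
    have htl : t ∈ l := (mem_nzPos v t).mpr ht.2
    have hidx : l.idxOf t < l.length := List.idxOf_lt_length_iff.mpr htl
    show l.getD (l.idxOf t) 0 = t
    rw [List.getD_eq_getElem _ _ hidx]; exact List.getElem_idxOf hidx
  · -- right inverse
    intro k hk
    simp only [Finset.mem_Ico] at hk
    have hkl : k < l.length := lt_of_lt_of_le hk.2 hw
    show l.idxOf (l.getD k 0) = k
    rw [List.getD_eq_getElem _ _ hkl]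
    exact List.get_idxOf (nzPos_nodup v) ⟨k, hkl⟩
  · -- values
    intro t ht
    simp only [Finset.mem_filter, Finset.mem_Ico] at ht
    have htl : t ∈ l := (mem_nzPos v t).mpr ht.2
    have hidx : l.idxOf t < l.length := List.idxOf_lt_length_iff.mpr htl
    rw [flattenW_getD v hidx]
    congr 1
    rw [List.getD_eq_getElem _ _ hidx]
    exact (List.getElem_idxOf hidx).symm




lemma extVal_padLeft (a : List ℕ) {t : ℕ} (ht : t < n) :
    extVal (padLeft n a) t
      = if n - a.length ≤ t then a.getD (t - (n - a.length)) 0 else 0 := by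
  rw [show t = ((⟨t, ht⟩ : Fin n) : ℕ) from rfl, extVal_eq]
  rfl

lemma nzPos_padLeft (a : List ℕ) (ha : ∀ x ∈ a, 0 < x) (hlen : a.length ≤ n) :
    nzPos (padLeft n a) = List.range' (n - a.length) a.length := by
  refine (fun p s1 s2 => List.Perm.eq_of_pairwise (le := (· < ·))
    (fun _ _ _ _ h1 h2 => absurd (lt_trans h1 h2) (lt_irrefl _)) s1 s2 p) ?_ ?_ ?_
  · rw [List.perm_ext_iff_of_nodup (nzPos_nodup _)
      ((List.pairwise_lt_range').imp Nat.ne_of_lt)]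
    intro t
    rw [mem_nzPos, List.mem_range'_1]
    constructor
    · intro h
      have htn : t < n := by
        by_contra hc
        exact h (extVal_of_ge _ (Nat.le_of_not_lt hc))
      rw [extVal_padLeft a htn] at h
      by_cases hge : n - a.length ≤ t
      · exact ⟨hge, by omega⟩
      · simp [hge] at h
    · rintro ⟨h1, h2⟩
      have htn : t < n := by omega
      rw [extVal_padLeft a htn, if_pos h1]
      have hidx : t - (n - a.length) < a.length := by omega
      rw [List.getD_eq_getElem _ _ hidx]
      have := ha _ (List.getElem_mem hidx)
      omega
  · exact nzPos_pairwise _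
  · exact List.pairwise_lt_range'

lemma flattenW_padLeft (a : List ℕ) (ha : ∀ x ∈ a, 0 < x) (hlen : a.length ≤ n) :
    flattenW (padLeft n a) = a := by
  rw [flattenW_eq, nzPos_padLeft a ha hlen]
  apply List.ext_getElem
  · simp
  · intro j h1 h2
    have hj : j < a.length := by simpa using h2
    have hlr : j < (List.range' (n - a.length) a.length).length := by simpa using hj
    rw [List.getElem_map]
    rw [List.getElem_range']
    have hpos : n - a.length + 1 * j < n := by omega
    rw [extVal_padLeft a hpos, if_pos (by omega)]
    rw [List.getD_eq_getElem _ _ (by omega : n - a.length + 1 * j - (n - a.length) < a.length)]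
    congr 1
    omega

lemma ofFn_padLeft (a : List ℕ) (hlen : a.length ≤ n) :
    List.ofFn (padLeft n a) = List.replicate (n - a.length) 0 ++ a := by
  apply List.ext_getElem
  · simp; omega
  · intro j h1 h2
    have hjn : j < n := by simpa using h1
    rw [List.getElem_ofFn]
    show padLeft n a ⟨j, _⟩ = _
    unfold padLeft
    by_cases h : n - a.length ≤ j
    · rw [if_pos h, List.getElem_append_right (by simpa using h)]
      simp only [List.length_replicate]
      rw [List.getD_eq_getElem _ _ (by omega)]
    · rw [if_neg h, List.getElem_append_left (by simpa using Nat.lt_of_not_le h)]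
      simp

lemma sum_padLeft (a : List ℕ) (hlen : a.length ≤ n) :
    ∑ i, padLeft n a i = a.sum := by
  rw [← List.sum_ofFn, ofFn_padLeft a hlen, List.sum_append]
  simp




lemma extRed_false (t : ℕ) : extRed (fun _ : Fin n => false) t = false := by
  unfold extRed
  split <;> rfl

lemma getD_range' {s l j : ℕ} (h : j < l) :
    (List.range' s l).getD j 0 = s + j := by
  rw [List.getD_eq_getElem _ _ (by simpa using h)]
  simpa using List.getElem_range' j (by simpa using h)

lemma refines_of_glide (a : List ℕ) (ha : ∀ x ∈ a, 0 < x) (hlen : a.length ≤ n)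
    (v : Fin n → ℕ) (h : IsGlide (padLeft n a) v (fun _ => false)) :
    ListRefines (flattenW v) a := by
  obtain ⟨-, e, he0, heln, hvan, hmono, hblocks⟩ := h
  rw [flattenW_padLeft a ha hlen] at heln hvan hmono hblocks
  set m := (nzPos v).length with hm
  set d : ℕ → ℕ := fun j => ((nzPos v).filter (fun t => decide (t < e j))).length with hd
  have hd0 : d 0 = 0 := by
    show ((nzPos v).filter _).length = 0
    rw [List.filter_eq_nil_iff.mpr (by intro t _; simp [he0])]
    rfl
  have hemono : ∀ i j, i ≤ j → j ≤ a.length → e i ≤ e j :=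
    mono_of_steps e a.length (fun j hj => le_of_lt (hmono j hj))
  have hdmono : ∀ j, j < a.length → d j ≤ d (j + 1) := by
    intro j hj
    exact List.Sublist.length_le (List.monotone_filter_right _ (by
      intro t ht
      simp only [decide_eq_true_eq] at ht ⊢
      exact lt_of_lt_of_le ht (le_of_lt (hmono j hj))))
  have hdl : d a.length = m := by
    show ((nzPos v).filter _).length = m
    rw [List.filter_eq_self.mpr (by
      intro t htmem
      simp only [decide_eq_true_eq]
      by_contra hc
      exact (mem_nzPos v t).mp htmem (hvan t (Nat.le_of_not_lt hc)))]
  have hdle : ∀ j, d j ≤ m := fun j => List.length_filter_le _ _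
  have hblocksum : ∀ j, j < a.length →
      ∑ t ∈ Finset.Ico (e j) (e (j + 1)), extVal v t
        = ∑ k ∈ Finset.Ico (d j) (d (j + 1)), (flattenW v).getD k 0 := by
    intro j hj
    apply ico_extVal_sum v (le_trans (hemono (j+1) a.length hj le_rfl) heln)
    · exact hdle (j + 1)
    · intro k hk
      have c1 := filter_length_char (nzPos_pairwise v) (e j) k hk
      have c2 := filter_length_char (nzPos_pairwise v) (e (j + 1)) k hk
      simp only [hd]
      omega
  have hasum : ∀ j, j < a.length →
      ∑ t ∈ Finset.Ico (e j) (e (j + 1)), extVal v t = a.getD j 0 := by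
    intro j hj
    have := (hblocks j hj).1
    simpa [extRed_false] using this
  refine ⟨(List.range a.length).map
      (fun j => (((flattenW v)).drop (d j)).take (d (j + 1) - d j)), ?_, ?_, ?_⟩
  · intro hc
    obtain ⟨j, hjr, hj⟩ := List.mem_map.mp hc
    have hjl : j < a.length := List.mem_range.mp hjr
    have : (0:ℕ) < a.getD j 0 := by
      rw [List.getD_eq_getElem _ _ hjl]
      exact ha _ (List.getElem_mem hjl)
    rw [← hasum j hjl, hblocksum j hjl, ← slice_sum, hj] at this
    simp at this
  · apply flatten_slices
    · exact hd0
    · rw [hdl, hm, flattenW_length]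
    · exact hdmono
  · apply List.ext_getElem
    · simp
    · intro j h1 h2
      simp only [List.getElem_map, List.getElem_range]
      have hjl : j < a.length := by simpa using h2
      rw [slice_sum, ← hblocksum j hjl, hasum j hjl, List.getD_eq_getElem _ _ hjl]



lemma glide_of_refines (a : List ℕ) (ha : ∀ x ∈ a, 0 < x) (hlen : a.length ≤ n)
    (v : Fin n → ℕ) (h : ListRefines (flattenW v) a) :
    IsGlide (padLeft n a) v (fun _ => false) := by
  obtain ⟨P, hP0, hPflat, hPsum⟩ := h
  have hPlen : P.length = a.length := by rw [← hPsum]; simp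
  set c : ℕ → ℕ := fun j => ((P.take j).map List.length).sum with hc
  have hc0 : c 0 = 0 := by simp [hc]
  have hcpos : ∀ j, j < P.length → 1 ≤ (P.getD j []).length := by
    intro j hj
    rw [List.getD_eq_getElem _ _ hj]
    have : P[j] ≠ [] := fun hce => hP0 (hce ▸ List.getElem_mem hj)
    have := List.length_pos_iff.mpr this
    omega
  have hcstep : ∀ j, j < P.length → c (j + 1) = c j + (P.getD j []).length := by
    intro j hj
    simp only [hc]
    rw [List.take_succ, List.map_append, List.sum_append]
    congr 1
    rw [List.getElem?_eq_getElem hj, List.getD_eq_getElem _ _ hj]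
    simp
  have hc1 : ∀ j, j < P.length → c j + 1 ≤ c (j + 1) := by
    intro j hj
    have := hcstep j hj
    have := hcpos j hj
    omega
  have hsteps := steps_ge c P.length hc1
  have hcmono : ∀ i j, i ≤ j → j ≤ P.length → c i ≤ c j := by
    intro i j hij hjP
    have := hsteps i j hij hjP
    omega
  have hcm : c P.length = (nzPos v).length := by
    simp only [hc]
    rw [List.take_length, ← flattenW_length, ← hPflat, List.length_flatten]
  have hcma : c a.length = (nzPos v).length := by rw [← hPlen]; exact hcm
  -- the block-end function
  set e : ℕ → ℕ := fun j => if j = 0 then 0 else (nzPos v).getD (c j - 1) 0 + 1 with he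
  have hjlen : ∀ j, j ≤ a.length → j ≥ 1 → c j - 1 < (nzPos v).length := by
    intro j hj hj1
    have h1 := hsteps 0 j (by omega) (by omega)
    have h2 := hcmono j P.length (by omega) le_rfl
    omega
  refine ⟨by simp, e, by simp [he], ?_, ?_, ?_, ?_⟩
  · -- e ℓ ≤ n
    rw [flattenW_padLeft a ha hlen]
    by_cases h0 : a.length = 0
    · simp [he, h0]
    · have h1 := hjlen a.length le_rfl (by omega)
      have h2 := nzPos_lt_n v (nzPos_getD_mem v h1)
      simp only [he, if_neg h0]
      omega
  · -- vanishing
    rw [flattenW_padLeft a ha hlen]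
    intro t ht
    by_contra hne
    have htm : t ∈ nzPos v := (mem_nzPos v t).mpr hne
    have hidx : (nzPos v).idxOf t < (nzPos v).length := List.idxOf_lt_length_iff.mpr htm
    by_cases h0 : a.length = 0
    · rw [h0] at ht
      have hP : P = [] := List.length_eq_zero_iff.mp (by omega)
      rw [hP] at hPflat
      have : (nzPos v).length = 0 := by
        rw [← flattenW_length, ← hPflat]; rfl
      omega
    · simp only [he, if_neg h0] at ht
      have h1 := hjlen a.length le_rfl (by omega)
      have hge : (nzPos v).getD ((nzPos v).idxOf t) 0
          ≤ (nzPos v).getD (c a.length - 1) 0 := by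
        rw [nzPos_le_iff v hidx h1]
        omega
      have hgetD : (nzPos v).getD ((nzPos v).idxOf t) 0 = t := by
        rw [List.getD_eq_getElem _ _ hidx]
        exact List.getElem_idxOf hidx
      omega
  · -- strictly increasing block ends
    rw [flattenW_padLeft a ha hlen]
    intro j hj
    by_cases h0 : j = 0
    · simp [he, h0]
    · simp only [he, if_neg h0, if_neg (by omega : ¬ j + 1 = 0)]
      have h1 := hjlen j (by omega) (by omega)
      have h2 := hjlen (j + 1) (by omega) (by omega)
      have hlt : c j - 1 < c (j + 1) - 1 := by
        have := hc1 j (by omega : j < P.length)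
        have := hsteps 0 j (by omega) (by omega)
        omega
      have := nzPos_strictMono v hlt h2
      omega
  · -- block conditions
    rw [flattenW_padLeft a ha hlen]
    intro j hj
    have hjP : j < P.length := by omega
    have h2 := hjlen (j + 1) (by omega) (by omega)
    have hcj1pos : 1 ≤ c (j + 1) := by
      have := hsteps 0 (j + 1) (by omega) (by omega)
      omega
    refine ⟨?_, ?_, ?_⟩
    · -- sum condition
      have hred : (Finset.filter (fun t => extRed (fun _ : Fin n => false) t = true)
          (Finset.Ico (e j) (e (j + 1)))).card = 0 := by
        simp [extRed_false]
      have hB : e (j + 1) ≤ n := by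
        simp only [he, if_neg (by omega : ¬ j + 1 = 0)]
        have := nzPos_lt_n v (nzPos_getD_mem v h2)
        omega
      have hslice : c (j + 1) - c j = (P.getD j []).length := by
        have := hcstep j hjP
        omega
      rw [ico_extVal_sum v hB (u := c j) (w := c (j + 1))
        (by have := hcmono (j+1) P.length (by omega) le_rfl; omega)]
      · rw [← slice_sum, hslice, ← hPflat, flatten_slice P j hjP, ← hPsum, hred]
        rw [List.getD_eq_getElem (List.map List.sum P) 0 (by simpa using hjP),
          List.getElem_map, List.getD_eq_getElem _ _ hjP]
        omega
      · -- characterization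
        intro k hk
        constructor
        · rintro ⟨hk1, hk2⟩
          constructor
          · by_cases h0 : j = 0
            · simp [hc, h0]
            · simp only [he, if_neg h0] at hk1
              have h1 := hjlen j (by omega) (by omega)
              by_contra hcon
              have hkle : k ≤ c j - 1 := by omega
              have := (nzPos_le_iff v hk h1).mpr hkle
              omega
          · simp only [he, if_neg (by omega : ¬ j + 1 = 0)] at hk2
            have hle : (nzPos v).getD k 0 ≤ (nzPos v).getD (c (j+1) - 1) 0 := by omega
            have := (nzPos_le_iff v hk h2).mp hle
            omega
        · rintro ⟨hk1, hk2⟩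
          constructor
          · by_cases h0 : j = 0
            · simp [he, h0]
            · simp only [he, if_neg h0]
              have h1 := hjlen j (by omega) (by omega)
              have hlt : c j - 1 < k := by
                have := hsteps 0 j (by omega) (by omega)
                omega
              have := nzPos_strictMono v hlt hk
              omega
          · simp only [he, if_neg (by omega : ¬ j + 1 = 0)]
            have hkle : k ≤ c (j + 1) - 1 := by omega
            rcases Nat.eq_or_lt_of_le hkle with rfl | hlt
            · omega
            · have := nzPos_strictMono v hlt h2
              omega
    · -- position condition
      rw [nzPos_padLeft a ha hlen, getD_range' hj]
      simp only [he, if_neg (by omega : ¬ j + 1 = 0)]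
      have hup := nzPos_upper v h2
      have hcb : c (j + 1) + (a.length - (j + 1)) ≤ (nzPos v).length := by
        have := hsteps (j + 1) P.length (by omega) le_rfl
        omega
      omega
    · -- first entry not red
      exact extRed_false _




lemma redCount_false : redCount (fun _ : Fin n => false) = 0 := by
  simp [redCount]

lemma redCount_pos {r : Fin n → Bool} (h : r ≠ fun _ => false) : redCount r ≠ 0 := by
  intro hc
  apply h
  funext i
  by_contra hi
  have hi' : r i = true := by
    cases hri : r i
    · exact absurd hri hi
    · rfl
  have : i ∈ Finset.univ.filter (fun i => r i = true) := by simp [hi']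
  rw [Finset.card_eq_zero.mp hc] at this
  simp at this

lemma glidePoly_zero (b : Fin n → ℕ) :
    glidePoly (0 : ℤ) b = ∑ p : Fin n → Fin ((∑ i, b i) + n + 1),
      if IsGlide b (fun i => (p i : ℕ)) (fun _ => false) then
        MvPolynomial.monomial (Finsupp.equivFunOnFinite.symm fun i => ((p i : ℕ))) (1:ℤ)
      else 0 := by
  unfold glidePoly
  rw [Fintype.sum_prod_type]
  apply Finset.sum_congr rfl
  intro p _
  rw [Finset.sum_eq_single (fun _ : Fin n => false)]
  · rw [redCount_false, pow_zero]
  · intro r _ hr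
    have h0 : (0:ℤ) ^ redCount r = 0 := by
      rw [zero_pow (redCount_pos hr)]
    rw [h0]
    split <;> simp
  · intro h
    exact absurd (Finset.mem_univ _) h

lemma sum_indep {N₁ N₂ : ℕ} (hN : N₁ ≤ N₂) (Q : (Fin n → ℕ) → Prop)
    (hb : ∀ w : Fin n → ℕ, Q w → ∀ i, w i < N₁) :
    (∑ p : Fin n → Fin N₁, if Q (fun i => (p i : ℕ)) then
        MvPolynomial.monomial (Finsupp.equivFunOnFinite.symm fun i => ((p i : ℕ))) (1:ℤ) else 0)
    = ∑ p : Fin n → Fin N₂, if Q (fun i => (p i : ℕ)) then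
        MvPolynomial.monomial (Finsupp.equivFunOnFinite.symm fun i => ((p i : ℕ))) (1:ℤ) else 0 := by
  have h1 : (∑ p : Fin n → Fin N₂, if Q (fun i => (p i : ℕ)) then
        MvPolynomial.monomial (Finsupp.equivFunOnFinite.symm fun i => ((p i : ℕ))) (1:ℤ) else 0)
      = ∑ p ∈ Finset.univ.filter (fun p : Fin n → Fin N₂ => ∀ i, (p i : ℕ) < N₁),
          if Q (fun i => (p i : ℕ)) then
            MvPolynomial.monomial (Finsupp.equivFunOnFinite.symm fun i => ((p i : ℕ))) (1:ℤ) else 0 := by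
    symm
    apply Finset.sum_subset (Finset.filter_subset _ _)
    intro p _ hp
    simp only [Finset.mem_filter, Finset.mem_univ, true_and, not_forall, not_lt] at hp
    rw [if_neg]
    intro hQ
    obtain ⟨i, hi⟩ := hp
    exact absurd (hb _ hQ i) (by omega)
  rw [h1]
  refine Finset.sum_bij'
    (fun (p : Fin n → Fin N₁) (_ : p ∈ (Finset.univ : Finset (Fin n → Fin N₁))) =>
      (fun j => Fin.castLE hN (p j) : Fin n → Fin N₂))
    (fun q hq =>
      (fun j => ⟨(q j : ℕ), by
        simp only [Finset.mem_filter, Finset.mem_univ, true_and] at hq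
        exact hq j⟩ : Fin n → Fin N₁))
    ?_ ?_ ?_ ?_ ?_
  · intro p _
    simp
  · intro q hq
    simp
  · intro p _
    funext j
    simp [Fin.ext_iff]
  · intro q hq
    funext j
    simp [Fin.ext_iff]
  · intro p _
    have hcoe : (fun i => ((Fin.castLE hN (p i) : Fin N₂) : ℕ)) = fun i => ((p i : ℕ)) := by
      funext i; simp
    simp only []
    rw [hcoe]



lemma refines_bound (a : List ℕ) {v : Fin n → ℕ} (h : ListRefines (flattenW v) a)
    (i : Fin n) : v i ≤ a.sum := by
  by_cases hvi : v i = 0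
  · simp [hvi]
  · obtain ⟨P, hP0, hPflat, hPsum⟩ := h
    have hmem : v i ∈ flattenW v := by
      unfold flattenW
      rw [List.mem_filter]
      exact ⟨List.mem_map.mpr ⟨i, List.mem_finRange i, rfl⟩, by simpa using hvi⟩
    rw [← hPflat] at hmem
    obtain ⟨l, hlP, hvl⟩ := List.mem_flatten.mp hmem
    have h1 : v i ≤ l.sum := mem_le_sum hvl
    have h2 : l.sum ≤ a.sum := by
      rw [← hPsum]
      exact mem_le_sum (List.mem_map_of_mem hlP)
    omega


end AuxProof

/-- For every strong composition `a` with `ℓ(a) ≤ n`, the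
fundamental quasisymmetric polynomial is the `β = 0` specialization of the
quasisymmetric glide polynomial: `F_a(x_1, …, x_n) = G_a^{(0)}(x_1, …, x_n)`. -/
theorem fundamental_eq_qsGlide_at_zero (n : ℕ) (a : List ℕ)
    (ha : ∀ x ∈ a, 0 < x) (hlen : a.length ≤ n) :
    fundQS (R := ℤ) n a = qsGlide (0 : ℤ) n a := by
  have hiff : ∀ w : Fin n → ℕ,
      (ListRefines (flattenW w) a ↔ IsGlide (padLeft n a) w (fun _ => false)) :=
    fun w => ⟨glide_of_refines a ha hlen w, refines_of_glide a ha hlen w⟩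
  have hQb : ∀ w : Fin n → ℕ, IsGlide (padLeft n a) w (fun _ => false) →
      ∀ i, w i < a.sum + 1 := fun w hw i =>
    Nat.lt_succ_of_le (refines_bound a (refines_of_glide a ha hlen w hw) i)
  have e1 : fundQS (R := ℤ) n a
      = ∑ p : Fin n → Fin (a.sum + 1),
          if IsGlide (padLeft n a) (fun i => ((p i : ℕ))) (fun _ => false) then
            MvPolynomial.monomial (Finsupp.equivFunOnFinite.symm fun i => ((p i : ℕ))) (1:ℤ)
          else 0 := by
    unfold fundQS
    apply Finset.sum_congr rfl
    intro p _
    exact if_congr (hiff _) rfl rfl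
  have hsum : (∑ i, padLeft n a i) = a.sum := sum_padLeft a hlen
  have e2 : qsGlide (0 : ℤ) n a
      = ∑ p : Fin n → Fin ((∑ i, padLeft n a i) + n + 1),
          if IsGlide (padLeft n a) (fun i => ((p i : ℕ))) (fun _ => false) then
            MvPolynomial.monomial (Finsupp.equivFunOnFinite.symm fun i => ((p i : ℕ))) (1:ℤ)
          else 0 := glidePoly_zero (padLeft n a)
  rw [e1, e2]
  exact sum_indep (by omega) (fun w => IsGlide (padLeft n a) w (fun _ => false)) hQb


end GlidePaper
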